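/- Let g₉ have (1,0)-basis ω¹,ω²,ω³ with dω¹ = −ω³∧ω̄³, dω² = (i/2)ω¹∧ω² + (1/2)ω¹∧ω̄³ − (i/2)ω²∧ω̄¹, dω³ = −(i/2)ω¹∧ω³ + (i/2)ω³∧ω̄¹. Then for any Hermitian form 2F = i(r²ω¹∧ω̄¹ + s²ω²∧ω̄² + t²ω³∧ω̄³) + u ω¹∧ω̄² − ū ω²∧ω̄¹ + v ω²∧ω̄³ − v̄ ω³∧ω̄² + z ω¹∧ω̄³ − z̄ ω³∧ω̄¹ with r²s² > |u|², the (3,2)-form 4∂F² has component 2(|u|² − r²s²) ≠ 0 on ω¹²³∧ω̄²∧ω̄³; moreover ∂̄(Λ^{3,1}) is spanned by ω¹²³∧ω̄¹∧ω̄² and ω¹²³∧ω̄¹∧ω̄³, hence ∂F² ∉ ∂̄(Λ^{3,1}). Consequently g₉ admits neither balanced nor strongly Gauduchon metrics. -/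
import Mathlib

noncomputable section

set_option maxHeartbeats 4000000
set_option maxRecDepth 8000

/-- The space of invariant complex forms: the exterior algebra over the span of
`ω¹, ω², ω³, ω̄¹, ω̄², ω̄³` (indexed `0,…,5`). -/
abbrev Lambda : Type := ExteriorAlgebra ℂ (Fin 6 → ℂ)

/-- The generators `ω¹, ω², ω³, ω̄¹, ω̄², ω̄³` as degree-one elements. -/
def w (i : Fin 6) : Lambda := ExteriorAlgebra.ι ℂ (Pi.single i 1)

/-- Antiderivation property (Leibniz rule against `1`-forms): the defining extension
property of (the bigraded pieces of) the Chevalley–Eilenberg differential. -/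
def IsAntideriv (D : Lambda →ₗ[ℂ] Lambda) : Prop :=
  D 1 = 0 ∧ ∀ (v : Fin 6 → ℂ) (x : Lambda),
    D (ExteriorAlgebra.ι ℂ v * x) =
      D (ExteriorAlgebra.ι ℂ v) * x - ExteriorAlgebra.ι ℂ v * D x

/-- The generic Hermitian form
`2F = i(r²ω¹∧ω̄¹ + s²ω²∧ω̄² + t²ω³∧ω̄³) + uω¹∧ω̄² − ūω²∧ω̄¹ + vω²∧ω̄³ − v̄ω³∧ω̄²
  + zω¹∧ω̄³ − z̄ω³∧ω̄¹`. -/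
def Fherm (r s t : ℝ) (u v z : ℂ) : Lambda :=
  (1 / 2 : ℂ) •
    (Complex.I • ((r : ℂ) ^ 2 • (w 0 * w 3) + (s : ℂ) ^ 2 • (w 1 * w 4) +
        (t : ℂ) ^ 2 • (w 2 * w 5)) +
      u • (w 0 * w 4) - (starRingEnd ℂ) u • (w 1 * w 3) +
      v • (w 1 * w 5) - (starRingEnd ℂ) v • (w 2 * w 4) +
      z • (w 0 * w 5) - (starRingEnd ℂ) z • (w 2 * w 3))

/-- Positivity constraints making `Fherm r s t u v z` a Hermitian metric. -/
def HermPos (r s t : ℝ) (u v z : ℂ) : Prop :=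
  r ≠ 0 ∧ s ≠ 0 ∧ t ≠ 0 ∧
  r ^ 2 * s ^ 2 > Complex.normSq u ∧ s ^ 2 * t ^ 2 > Complex.normSq v ∧
  r ^ 2 * t ^ 2 > Complex.normSq z ∧
  r ^ 2 * s ^ 2 * t ^ 2 +
      2 * (Complex.I * (starRingEnd ℂ) u * (starRingEnd ℂ) v * z).re >
    t ^ 2 * Complex.normSq u + r ^ 2 * Complex.normSq v + s ^ 2 * Complex.normSq z

/-! ### Auxiliary machinery -/

lemma w_sq (i : Fin 6) : w i * w i = 0 := ExteriorAlgebra.ι_sq_zero _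

lemma w_sq' (i : Fin 6) (x : Lambda) : w i * (w i * x) = 0 := by
  rw [← mul_assoc, w_sq, zero_mul]

lemma w_swap {i j : Fin 6} (_h : i < j) : w j * w i = -(w i * w j) :=
  eq_neg_of_add_eq_zero_left (ExteriorAlgebra.ι_add_mul_swap _ _)

lemma w_swap' {i j : Fin 6} (h : i < j) (x : Lambda) :
    w j * (w i * x) = -(w i * (w j * x)) := by
  rw [← mul_assoc, w_swap h, ← mul_assoc, neg_mul]

/-- Coordinates `0,1,2,4,5`. -/
def sel : Fin 5 → Fin 6 := ![0, 1, 2, 4, 5]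

/-- The family of alternating maps computing the coefficient on `ω¹²³∧ω̄²∧ω̄³`. -/
def coefA : ∀ i : ℕ, (Fin 6 → ℂ) [⋀^Fin i]→ₗ[ℂ] ℂ
  | 5 => Matrix.detRowAlternating.compLinearMap (LinearMap.funLeft ℂ ℂ sel)
  | _ => 0

/-- The linear functional extracting the coefficient on `w 0 * w 1 * w 2 * w 4 * w 5`. -/
def phi : Lambda →ₗ[ℂ] ℂ := ExteriorAlgebra.liftAlternating coefA

lemma mono_eq (a b c d e : Fin 6) :
    w a * (w b * (w c * (w d * w e))) =
      ExteriorAlgebra.ιMulti ℂ 5 ![Pi.single a 1, Pi.single b 1, Pi.single c 1,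
        Pi.single d 1, Pi.single e 1] := by
  rw [ExteriorAlgebra.ιMulti_apply]
  simp [List.ofFn_succ, w, mul_assoc]

lemma phi_mono (a b c d e : Fin 6) :
    phi (w a * (w b * (w c * (w d * w e)))) =
      Matrix.det (Matrix.of fun i j =>
        (![(Pi.single a 1 : Fin 6 → ℂ), Pi.single b 1, Pi.single c 1, Pi.single d 1,
          Pi.single e 1] i) (sel j)) := by
  rw [mono_eq, phi, ExteriorAlgebra.liftAlternating_apply_ιMulti]
  rfl

lemma phiC : phi (w 0 * (w 1 * (w 2 * (w 4 * w 5)))) = 1 := by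
  rw [phi_mono]
  have : (Matrix.of fun i j =>
      (![(Pi.single (0 : Fin 6) 1 : Fin 6 → ℂ), Pi.single 1 1, Pi.single 2 1, Pi.single 4 1,
        Pi.single 5 1] i) (sel j)) = 1 := by
    ext i j
    fin_cases i <;> fin_cases j <;>
      simp [sel, Pi.single_apply, Matrix.one_apply, Matrix.vecHead, Matrix.vecTail]
  rw [this, Matrix.det_one]

lemma phiA : phi (w 0 * (w 1 * (w 2 * (w 3 * w 4)))) = 0 := by
  rw [phi_mono]
  apply Matrix.det_eq_zero_of_row_eq_zero 3
  intro j; fin_cases j <;> simp [sel, Pi.single_apply, Matrix.vecHead, Matrix.vecTail]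

lemma phiB : phi (w 0 * (w 1 * (w 2 * (w 3 * w 5)))) = 0 := by
  rw [phi_mono]
  apply Matrix.det_eq_zero_of_row_eq_zero 3
  intro j; fin_cases j <;> simp [sel, Pi.single_apply, Matrix.vecHead, Matrix.vecTail]

lemma phiA' : phi (w 0 * w 1 * w 2 * w 3 * w 4) = 0 := by
  simpa only [mul_assoc] using phiA

lemma phiB' : phi (w 0 * w 1 * w 2 * w 3 * w 5) = 0 := by
  simpa only [mul_assoc] using phiB

lemma phiC' : phi (w 0 * w 1 * w 2 * w 4 * w 5) = 1 := by
  simpa only [mul_assoc] using phiC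

/-- on `(g₉, J)` (`dω¹ = −ω³∧ω̄³`,
`dω² = (i/2)ω¹∧ω² + (1/2)ω¹∧ω̄³ − (i/2)ω²∧ω̄¹`,
`dω³ = −(i/2)ω¹∧ω³ + (i/2)ω³∧ω̄¹`): the component of `4∂F²` on `ω¹²³∧ω̄²∧ω̄³` is
`2(|u|²−r²s²) ≠ 0`, `∂̄(Λ^{3,1})` is spanned by `ω¹²³∧ω̄¹∧ω̄²` and `ω¹²³∧ω̄¹∧ω̄³`,
and `∂F² ∉ ∂̄(Λ^{3,1})`, `∂F² ≠ 0`: no balanced and no sG metric. -/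
theorem stmt14
    (Dp Db : Lambda →ₗ[ℂ] Lambda) (hDp : IsAntideriv Dp) (hDb : IsAntideriv Db)
    (hp0 : Dp (w 0) = 0)
    (hp1 : Dp (w 1) = (Complex.I / 2) • (w 0 * w 1))
    (hp2 : Dp (w 2) = (-(Complex.I / 2)) • (w 0 * w 2))
    (hp3 : Dp (w 3) = w 2 * w 5)
    (hp4 : Dp (w 4) = (1 / 2 : ℂ) • (w 3 * w 2) + (Complex.I / 2) • (w 4 * w 0))
    (hp5 : Dp (w 5) = (-(Complex.I / 2)) • (w 5 * w 0))
    (hb0 : Db (w 0) = -(w 2 * w 5))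
    (hb1 : Db (w 1) = (1 / 2 : ℂ) • (w 0 * w 5) + (-(Complex.I / 2)) • (w 1 * w 3))
    (hb2 : Db (w 2) = (Complex.I / 2) • (w 2 * w 3))
    (hb3 : Db (w 3) = 0)
    (hb4 : Db (w 4) = (-(Complex.I / 2)) • (w 3 * w 4))
    (hb5 : Db (w 5) = (Complex.I / 2) • (w 3 * w 5))
    (r s t : ℝ) (u v z : ℂ) (hF : HermPos r s t u v z) :
    (∃ c₁ c₂ : ℂ,
      (4 : ℂ) • Dp (Fherm r s t u v z * Fherm r s t u v z) =
        c₁ • (w 0 * w 1 * w 2 * w 3 * w 4) + c₂ • (w 0 * w 1 * w 2 * w 3 * w 5) +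
          (2 * ((Complex.normSq u : ℂ) - (r : ℂ) ^ 2 * (s : ℂ) ^ 2)) •
            (w 0 * w 1 * w 2 * w 4 * w 5)) ∧
    2 * ((Complex.normSq u : ℂ) - (r : ℂ) ^ 2 * (s : ℂ) ^ 2) ≠ 0 ∧
    Submodule.map Db (Submodule.span ℂ
        {w 0 * w 1 * w 2 * w 3, w 0 * w 1 * w 2 * w 4, w 0 * w 1 * w 2 * w 5}) =
      Submodule.span ℂ {w 0 * w 1 * w 2 * w 3 * w 4, w 0 * w 1 * w 2 * w 3 * w 5} ∧
    Dp (Fherm r s t u v z * Fherm r s t u v z) ∉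
      Submodule.map Db (Submodule.span ℂ
        {w 0 * w 1 * w 2 * w 3, w 0 * w 1 * w 2 * w 4, w 0 * w 1 * w 2 * w 5}) ∧
    Dp (Fherm r s t u v z * Fherm r s t u v z) ≠ 0 := by
  have leibp : ∀ (i : Fin 6) (x : Lambda), Dp (w i * x) = Dp (w i) * x - w i * Dp x :=
    fun i x => hDp.2 _ _
  have leibb : ∀ (i : Fin 6) (x : Lambda), Db (w i * x) = Db (w i) * x - w i * Db x :=
    fun i x => hDb.2 _ _
  set A := w 0 * w 1 * w 2 * w 3 * w 4 with hA
  set B := w 0 * w 1 * w 2 * w 3 * w 5 with hB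
  set C := w 0 * w 1 * w 2 * w 4 * w 5 with hC
  set k : ℂ := 2 * ((Complex.normSq u : ℂ) - (r : ℂ) ^ 2 * (s : ℂ) ^ 2) with hk
  -- the main identity
  have hmain : (4 : ℂ) • Dp (Fherm r s t u v z * Fherm r s t u v z) =
      (Complex.I * (starRingEnd ℂ) u * (starRingEnd ℂ) v - (s : ℂ) ^ 2 * (starRingEnd ℂ) z) • A +
        (-(Complex.I * (s : ℂ) ^ 2 * z) - Complex.I * v * (starRingEnd ℂ) z -
            (t : ℂ) ^ 2 * (starRingEnd ℂ) u + u * v) • B + k • C := by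
    rw [Fherm, hA, hB, hC, hk]
    simp (config := { decide := true, maxSteps := 4000000 }) only
      [smul_mul_assoc, mul_smul_comm, smul_smul, smul_add, smul_sub, mul_add, add_mul,
       mul_sub, sub_mul, mul_assoc, map_add, map_sub, map_smul, map_neg, leibp, hp0, hp1,
       hp2, hp3, hp4, hp5, w_swap', w_swap, w_sq, w_sq', mul_zero, zero_mul, smul_zero,
       zero_smul, mul_neg, neg_mul, smul_neg, neg_neg, sub_zero, zero_sub, add_zero,
       zero_add, sub_self, neg_zero, Fin.isValue]
    match_scalars <;>
      · ring_nf
        simp only [Complex.I_sq, ← Complex.mul_conj]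
        try ring
  -- nonvanishing of the key coefficient
  have hkne : k ≠ 0 := by
    have h4 : Complex.normSq u < r ^ 2 * s ^ 2 := hF.2.2.2.1
    have : ((Complex.normSq u - r ^ 2 * s ^ 2 : ℝ) : ℂ) ≠ 0 := by
      exact_mod_cast sub_ne_zero.mpr (ne_of_lt h4)
    rw [hk]
    push_cast at this ⊢
    exact mul_ne_zero two_ne_zero this
  -- values of Db on the (3,1)-monomials
  have hd3 : Db (w 0 * w 1 * w 2 * w 3) = 0 := by
    simp (config := { decide := true, maxSteps := 4000000 }) only
      [smul_mul_assoc, mul_smul_comm, smul_smul, smul_add, smul_sub, mul_add, add_mul,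
       mul_sub, sub_mul, mul_assoc, map_add, map_sub, map_smul, map_neg, leibb, hb0, hb1,
       hb2, hb3, hb4, hb5, w_swap', w_swap, w_sq, w_sq', mul_zero, zero_mul, smul_zero,
       zero_smul, mul_neg, neg_mul, smul_neg, neg_neg, sub_zero, zero_sub, add_zero,
       zero_add, sub_self, neg_zero, Fin.isValue]
  have hd4 : Db (w 0 * w 1 * w 2 * w 4) = (Complex.I / 2) • A := by
    rw [hA]
    simp (config := { decide := true, maxSteps := 4000000 }) only
      [smul_mul_assoc, mul_smul_comm, smul_smul, smul_add, smul_sub, mul_add, add_mul,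
       mul_sub, sub_mul, mul_assoc, map_add, map_sub, map_smul, map_neg, leibb, hb0, hb1,
       hb2, hb3, hb4, hb5, w_swap', w_swap, w_sq, w_sq', mul_zero, zero_mul, smul_zero,
       zero_smul, mul_neg, neg_mul, smul_neg, neg_neg, sub_zero, zero_sub, add_zero,
       zero_add, sub_self, neg_zero, Fin.isValue]
    try module
  have hd5 : Db (w 0 * w 1 * w 2 * w 5) = (-(Complex.I / 2)) • B := by
    rw [hB]
    simp (config := { decide := true, maxSteps := 4000000 }) only
      [smul_mul_assoc, mul_smul_comm, smul_smul, smul_add, smul_sub, mul_add, add_mul,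
       mul_sub, sub_mul, mul_assoc, map_add, map_sub, map_smul, map_neg, leibb, hb0, hb1,
       hb2, hb3, hb4, hb5, w_swap', w_swap, w_sq, w_sq', mul_zero, zero_mul, smul_zero,
       zero_smul, mul_neg, neg_mul, smul_neg, neg_neg, sub_zero, zero_sub, add_zero,
       zero_add, sub_self, neg_zero, Fin.isValue]
    try module
  -- the span computation
  have hspan : Submodule.map Db (Submodule.span ℂ
      {w 0 * w 1 * w 2 * w 3, w 0 * w 1 * w 2 * w 4, w 0 * w 1 * w 2 * w 5}) =
      Submodule.span ℂ {A, B} := by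
    rw [Submodule.map_span, Set.image_insert_eq, Set.image_insert_eq, Set.image_singleton,
      hd3, hd4, hd5]
    apply le_antisymm
    · rw [Submodule.span_le]
      rintro x hx
      simp only [Set.mem_insert_iff, Set.mem_singleton_iff] at hx
      rcases hx with rfl | rfl | rfl
      · exact Submodule.zero_mem _
      · exact Submodule.smul_mem _ _ (Submodule.subset_span (by simp))
      · exact Submodule.smul_mem _ _ (Submodule.subset_span (by simp))
    · rw [Submodule.span_le]
      rintro x hx
      simp only [Set.mem_insert_iff, Set.mem_singleton_iff] at hx
      have e1 : ((-2 : ℂ) * Complex.I) * (Complex.I / 2) = 1 := by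
        linear_combination (-1 : ℂ) * Complex.I_sq
      have e2 : ((2 : ℂ) * Complex.I) * (-(Complex.I / 2)) = 1 := by
        linear_combination (-1 : ℂ) * Complex.I_sq
      rcases hx with h | h
      · have hm := Submodule.smul_mem
          (Submodule.span ℂ {0, (Complex.I / 2) • A, (-(Complex.I / 2)) • B})
          ((-2 : ℂ) * Complex.I) (Submodule.subset_span
            (show (Complex.I / 2) • A ∈ _ by simp))
        rw [smul_smul, e1, one_smul] at hm
        rw [h]; exact hm
      · have hm := Submodule.smul_mem
          (Submodule.span ℂ {0, (Complex.I / 2) • A, (-(Complex.I / 2)) • B})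
          ((2 : ℂ) * Complex.I) (Submodule.subset_span
            (show (-(Complex.I / 2)) • B ∈ _ by simp))
        rw [smul_smul, e2, one_smul] at hm
        rw [h]; exact hm
  -- phi of the main expression
  have hphi4 : 4 * phi (Dp (Fherm r s t u v z * Fherm r s t u v z)) = k := by
    have := congrArg phi hmain
    simpa only [map_smul, map_add, smul_eq_mul, phiA', phiB', phiC', mul_zero, mul_one,
      zero_add, add_zero, hA, hB, hC] using this
  have hphine : phi (Dp (Fherm r s t u v z * Fherm r s t u v z)) ≠ 0 := by
    intro h
    rw [h, mul_zero] at hphi4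
    exact hkne hphi4.symm
  refine ⟨⟨_, _, hmain⟩, hkne, hspan, ?_, ?_⟩
  · intro hmem
    rw [hspan] at hmem
    have hker : ({A, B} : Set Lambda) ⊆ (LinearMap.ker phi : Submodule ℂ Lambda) := by
      rintro x hx
      simp only [Set.mem_insert_iff, Set.mem_singleton_iff] at hx
      rcases hx with rfl | rfl
      · simpa [LinearMap.mem_ker] using phiA'
      · simpa [LinearMap.mem_ker] using phiB'
    have := (Submodule.span_le.mpr hker) hmem
    rw [LinearMap.mem_ker] at this
    exact hphine this
  · intro h
    rw [h, map_zero] at hphine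
    exact hphine rfl
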